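/- arXiv:1505.04304 — 2 statements merged into one kernel-verified Lean document; each statement's English description precedes it below -/
import Mathlib

section
/- Let N be a large subalgebra of the pseudo MV-algebra M = Γ(G,u), suppose both N and M are strongly projectable, and let I be a polar ideal of N. Then for a Boolean element a ∈ N: I = ↓_N a if and only if (I^{⊥_N})^{⊥_M} = ↓_M a. -/
variable {G : Type*} [Lattice G] [AddGroup G]
  [CovariantClass G G (· + ·) (· ≤ ·)]
  [CovariantClass G G (Function.swap (· + ·)) (· ≤ ·)]

/-- `u` is a strong unit of the lattice-ordered group `G`. -/
def IsStrongUnit (u : G) : Prop := 0 ≤ u ∧ ∀ x : G, ∃ n : ℕ, x ≤ n • u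

/-- The operation `x ⊕ y := (x + y) ⊓ u` of the pseudo MV-algebra `Γ(G,u)`. -/
def oplus (u x y : G) : G := (x + y) ⊓ u

/-- The operation `x ⊙ y := (x - u + y) ⊔ 0` of the pseudo MV-algebra `Γ(G,u)`. -/
def odot (u x y : G) : G := (x - u + y) ⊔ 0

/-- `n.x := x ⊕ ⋯ ⊕ x` (`n` summands), with `0.x = 0`. -/
def nOplus (u : G) : ℕ → G → G
  | 0, _ => 0
  | n + 1, x => oplus u (nOplus u n x) x

/-- `I` is an ideal of the pseudo MV-algebra with carrier `C ⊆ Γ(G,u)`: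
a nonempty subset of `C`, downward closed within `C`, and closed under `⊕`. -/
def IsIdealIn (u : G) (C I : Set G) : Prop :=
  I ⊆ C ∧ I.Nonempty ∧ (∀ x ∈ I, ∀ y ∈ C, y ≤ x → y ∈ I) ∧
    ∀ x ∈ I, ∀ y ∈ I, oplus u x y ∈ I

/-- `I` is a normal ideal: `x ⊕ I = I ⊕ x` for all `x ∈ C`. -/
def IsNormalIdealIn (u : G) (C I : Set G) : Prop :=
  IsIdealIn u C I ∧ ∀ x ∈ C, (fun i => oplus u x i) '' I = (fun i => oplus u i x) '' I

/-- `⟨X⟩_n`, the smallest normal ideal (of the carrier `C`) containing `X`. -/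
def normalGenIn (u : G) (C X : Set G) : Set G :=
  ⋂₀ {I | IsNormalIdealIn u C I ∧ X ⊆ I}

/-- The polar `X^⊥ = {y ∈ C : y ∧ x = 0 for all x ∈ X}` computed in carrier `C`. -/
def polarIn (C X : Set G) : Set G := {y ∈ C | ∀ x ∈ X, y ⊓ x = 0}

/-- `A ⊕ B := {a ⊕ b : a ∈ A, b ∈ B}`. -/
def setOplus (u : G) (A B : Set G) : Set G := Set.image2 (oplus u) A B

/-- `↓a` computed within the carrier `C`. -/
def dsetIn (C : Set G) (a : G) : Set G := {x ∈ C | x ≤ a}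

/-- `I` is a summand-ideal of the carrier `C`: a normal ideal such that for
some normal ideal `J`, `I ∩ J = {0}` and `⟨I ∪ J⟩_n = C`. -/
def IsSummandIdealIn (u : G) (C I : Set G) : Prop :=
  IsNormalIdealIn u C I ∧ ∃ J, IsNormalIdealIn u C J ∧ I ∩ J = {0} ∧
    normalGenIn u C (I ∪ J) = C

/-- `I` is a polar ideal of the carrier `C`: `I = I^⊥⊥`. -/
def IsPolarIdealIn (C I : Set G) : Prop := polarIn C (polarIn C I) = I

/-- `a` is a Boolean element of the carrier `C`: `a ∈ C` and `a ⊕ a = a`. -/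
def IsBooleanIn (u : G) (C : Set G) (a : G) : Prop := a ∈ C ∧ oplus u a a = a

/-- The carrier `C` is strongly projectable: every polar ideal is a summand-ideal. -/
def IsStronglyProjectableIn (u : G) (C : Set G) : Prop :=
  ∀ I : Set G, IsPolarIdealIn C I → IsSummandIdealIn u C I

/-- `N` is a subalgebra of `Γ(G,u)`: contains `0` and `u`, closed under `⊕`,
`x⁻ = u - x` and `x∼ = -x + u`. -/
def IsSubalg (u : G) (N : Set G) : Prop :=
  N ⊆ Set.Icc 0 u ∧ 0 ∈ N ∧ u ∈ N ∧
    (∀ x ∈ N, ∀ y ∈ N, oplus u x y ∈ N) ∧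
    (∀ x ∈ N, u - x ∈ N) ∧ (∀ x ∈ N, -x + u ∈ N)

/-- `N` is a large subalgebra of `Γ(G,u)`: for every nonzero `y ∈ Γ(G,u)` there
are `n ∈ ℕ` and a nonzero `x ∈ N` with `x ≤ n.y`. -/
def IsLargeSubalg (u : G) (N : Set G) : Prop :=
  IsSubalg u N ∧ ∀ y ∈ Set.Icc (0 : G) u, y ≠ 0 →
    ∃ n : ℕ, ∃ x ∈ N, x ≠ 0 ∧ x ≤ nOplus u n y

private lemma disj_add {x p q : G} (hx : 0 ≤ x) (hp : 0 ≤ p) (hq : 0 ≤ q)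
    (h1 : x ⊓ p = 0) (h2 : x ⊓ q = 0) : x ⊓ (p + q) = 0 := by
  have key : (x ⊓ p) + (x ⊓ q) = ((x + x) ⊓ (p + x)) ⊓ ((x + q) ⊓ (p + q)) := by
    rw [add_inf, inf_add, inf_add]
  have hle : x ⊓ (p + q) ≤ (x ⊓ p) + (x ⊓ q) := by
    rw [key]
    refine le_inf (le_inf ?_ ?_) (le_inf ?_ ?_)
    · exact inf_le_left.trans (le_add_of_nonneg_right hx)
    · exact inf_le_left.trans (le_add_of_nonneg_left hp)
    · exact inf_le_left.trans (le_add_of_nonneg_right hq)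
    · exact inf_le_right
  rw [h1, h2, add_zero] at hle
  exact le_antisymm hle (le_inf hx (add_nonneg hp hq))

private lemma disj_nsmul {x z : G} (hx : 0 ≤ x) (hz : 0 ≤ z)
    (h : x ⊓ z = 0) : ∀ n : ℕ, x ⊓ (n • z) = 0 := by
  intro n
  induction n with
  | zero => simpa using inf_eq_right.mpr hx
  | succ n ih =>
    rw [succ_nsmul]
    exact disj_add hx (nsmul_nonneg hz n) hz ih h

private lemma nOplus_le_nsmul {z : G} (u : G) (hz : 0 ≤ z) :
    ∀ n : ℕ, nOplus u n z ≤ n • z := by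
  intro n
  induction n with
  | zero => simp [nOplus]
  | succ n ih =>
    rw [succ_nsmul]
    calc nOplus u (n+1) z = (nOplus u n z + z) ⊓ u := rfl
    _ ≤ nOplus u n z + z := inf_le_left
    _ ≤ n • z + z := add_le_add ih le_rfl

private lemma nsmul_mono {z y : G} (h : z ≤ y) : ∀ n : ℕ, n • z ≤ n • y := by
  intro n
  induction n with
  | zero => simp
  | succ n ih => rw [succ_nsmul, succ_nsmul]; exact add_le_add ih h

theorem stmt17 (u : G) (hu : IsStrongUnit u) (N : Set G)
    (hN : IsLargeSubalg u N)
    (hNsp : IsStronglyProjectableIn u N)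
    (hMsp : IsStronglyProjectableIn u (Set.Icc (0 : G) u))
    (I : Set G) (hI : IsPolarIdealIn N I)
    (a : G) (haN : a ∈ N) (hbool : oplus u a a = a) :
    I = dsetIn N a ↔ polarIn (Set.Icc (0 : G) u) (polarIn N I) = dsetIn (Set.Icc (0 : G) u) a := by
  obtain ⟨hsub, hlarge⟩ := hN
  have hNM : N ⊆ Set.Icc 0 u := hsub.1
  have haM : a ∈ Set.Icc (0:G) u := hNM haN
  have hau : (0:G) ≤ -a + u := by
    have := add_le_add_left haM.2 (-a)
    simpa using this
  have hdis : a ⊓ (-a + u) = 0 := by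
    have h1 : a + (a ⊓ (-a + u)) = a := by
      rw [add_inf]
      simpa [oplus] using hbool
    have h2 : a + (a ⊓ (-a + u)) = a + 0 := by rw [h1, add_zero]
    exact add_left_cancel h2
  constructor
  · rintro rfl
    ext y
    constructor
    · rintro ⟨hyM, hy⟩
      refine ⟨hyM, ?_⟩
      set z := y ⊓ (-a + u) with hzdef
      have hz0 : 0 ≤ z := le_inf hyM.1 hau
      have hzu : z ≤ u := inf_le_left.trans hyM.2
      have hza : z ⊓ a = 0 := by
        refine le_antisymm ?_ (le_inf hz0 haM.1)
        calc z ⊓ a ≤ (-a + u) ⊓ a := inf_le_inf_right a inf_le_right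
        _ = a ⊓ (-a + u) := inf_comm _ _
        _ = 0 := hdis
      have hz : z = 0 := by
        by_contra hne
        obtain ⟨n, x, hxN, hx0, hxle⟩ := hlarge z ⟨hz0, hzu⟩ hne
        have hxM := hNM hxN
        have hxz : x ≤ n • z := hxle.trans (nOplus_le_nsmul u hz0 n)
        have hxa : x ⊓ a = 0 := by
          refine le_antisymm ?_ (le_inf hxM.1 haM.1)
          calc x ⊓ a ≤ (n • z) ⊓ a := inf_le_inf_right a hxz
          _ = a ⊓ (n • z) := inf_comm _ _
          _ = 0 := disj_nsmul haM.1 hz0 (by rw [inf_comm]; exact hza) n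
        have hxpol : x ∈ polarIn N (dsetIn N a) := by
          refine ⟨hxN, fun j hj => ?_⟩
          have hjM := hNM hj.1
          refine le_antisymm ?_ (le_inf hxM.1 hjM.1)
          calc x ⊓ j ≤ x ⊓ a := inf_le_inf_left x hj.2
          _ = 0 := hxa
        have hyx : y ⊓ x = 0 := hy x hxpol
        have hxy : x ⊓ (n • y) = 0 :=
          disj_nsmul hxM.1 hyM.1 (by rw [inf_comm]; exact hyx) n
        have hle : x ≤ n • y := hxz.trans (nsmul_mono inf_le_left n)
        exact hx0 (le_antisymm (by rw [← hxy]; exact le_inf le_rfl hle) hxM.1)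
      have key : (a + y) ⊓ u = a := by
        have h3 : a + z = a := by rw [hz, add_zero]
        rw [hzdef, add_inf] at h3
        simpa using h3
      calc y ≤ (a + y) ⊓ u := le_inf (le_add_of_nonneg_left haM.1) hyM.2
      _ = a := key
    · rintro ⟨hyM, hya⟩
      refine ⟨hyM, fun x hx => ?_⟩
      have hxa : x ⊓ a = 0 := hx.2 a ⟨haN, le_rfl⟩
      have hxM := hNM hx.1
      refine le_antisymm ?_ (le_inf hyM.1 hxM.1)
      calc y ⊓ x ≤ a ⊓ x := inf_le_inf_right x hya
      _ = x ⊓ a := inf_comm _ _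
      _ = 0 := hxa
  · intro heq
    ext x
    constructor
    · intro hxI
      have hxI' := hxI
      rw [← hI] at hxI'
      have hxN : x ∈ N := hxI'.1
      have hxM := hNM hxN
      have hxpol : x ∈ polarIn (Set.Icc (0:G) u) (polarIn N I) := by
        refine ⟨hxM, fun j hj => ?_⟩
        rw [inf_comm]
        exact hj.2 x hxI
      rw [heq] at hxpol
      exact ⟨hxN, hxpol.2⟩
    · rintro ⟨hxN, hxa⟩
      rw [← hI]
      refine ⟨hxN, fun j hj => ?_⟩
      have hjM := hNM hj.1
      have haM' : a ∈ polarIn (Set.Icc (0:G) u) (polarIn N I) := by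
        rw [heq]; exact ⟨haM, le_rfl⟩
      have haj : a ⊓ j = 0 := haM'.2 j hj
      refine le_antisymm ?_ (le_inf (hNM hxN).1 hjM.1)
      calc x ⊓ j ≤ a ⊓ j := inf_le_inf_right j hxa
      _ = 0 := haj
end

section
/- Let A be a large subalgebra of the pseudo MV-algebra B = Γ(G,u) and suppose B is strongly projectable. Let (M_i)_{i∈J} be the family of all strongly projectable subalgebras of B containing A, and set M = ⋂_{i∈J} M_i. Then M is a strongly projectable subalgebra of B containing A. -/
variable {G : Type*} [Lattice G] [AddGroup G]
  [CovariantClass G G (· + ·) (· ≤ ·)]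
  [CovariantClass G G (Function.swap (· + ·)) (· ≤ ·)]

section SPHelpers
set_option linter.unusedSectionVars false
set_option linter.unusedVariables false

variable {u : G}

private lemma SP.meet_add_le {a b c : G} (ha : 0 ≤ a) (hb : 0 ≤ b) (hc : 0 ≤ c) :
    a ⊓ (b + c) ≤ a ⊓ b + a ⊓ c := by
  have h : a ⊓ b + a ⊓ c = ((a + a) ⊓ (a + c)) ⊓ ((b + a) ⊓ (b + c)) := by
    rw [inf_add a b (a ⊓ c), add_inf a c a, add_inf a c b]
  rw [h]
  refine le_inf (le_inf ?_ ?_) (le_inf ?_ ?_)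
  · exact inf_le_left.trans (le_add_of_nonneg_right ha)
  · exact inf_le_left.trans (le_add_of_nonneg_right hc)
  · exact inf_le_left.trans (le_add_of_nonneg_left hb)
  · exact inf_le_right

private lemma SP.inf_zero_add_comm {a b : G} (h : a ⊓ b = 0) : a + b = b + a := by
  have h1 : (0 : G) ⊓ (-a + b) = -a := by
    have h' := add_inf a b (-a)
    rw [h, add_zero, neg_add_cancel] at h'
    exact h'.symm
  have h2 : (0 : G) ⊓ (-b + a) = -b := by
    have h' := add_inf b a (-b)
    rw [inf_comm b a, h, add_zero, neg_add_cancel] at h'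
    exact h'.symm
  have h3 : (-a + b) ⊔ 0 = b := by
    have e : -((-b + a) ⊓ 0) = (-a + b) ⊔ 0 := by
      rw [neg_inf, neg_zero, neg_add_rev, neg_neg]
    rw [← e, inf_comm, h2, neg_neg]
  have h4 : (-b + a) ⊔ 0 = a := by
    have e : -((-a + b) ⊓ 0) = (-b + a) ⊔ 0 := by
      rw [neg_inf, neg_zero, neg_add_rev, neg_neg]
    rw [← e, inf_comm, h1, neg_neg]
  have hba : b ⊔ a = a + b := by
    have e := add_sup (-a + b) 0 a
    rw [h3, add_neg_cancel_left, add_zero] at e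
    exact e.symm
  have hab : a ⊔ b = b + a := by
    have e := add_sup (-b + a) 0 b
    rw [h4, add_neg_cancel_left, add_zero] at e
    exact e.symm
  rw [← hba, sup_comm, hab]

private lemma SP.disj_add {a b c : G} (ha : 0 ≤ a) (hb : 0 ≤ b) (hc : 0 ≤ c)
    (hab : a ⊓ b = 0) (hac : a ⊓ c = 0) : a ⊓ (b + c) = 0 :=
  le_antisymm (by simpa [hab, hac] using SP.meet_add_le ha hb hc)
    (le_inf ha (add_nonneg hb hc))

private lemma SP.oplus_le_u {x y : G} : oplus u x y ≤ u := inf_le_right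

private lemma SP.oplus_nonneg (hu : 0 ≤ u) {x y : G} (hx : 0 ≤ x) (hy : 0 ≤ y) :
    0 ≤ oplus u x y := le_inf (add_nonneg hx hy) hu

private lemma SP.oplus_mono {x x' y y' : G} (hx : x ≤ x') (hy : y ≤ y') :
    oplus u x y ≤ oplus u x' y' := inf_le_inf (add_le_add hx hy) le_rfl

private lemma SP.le_oplus_left {x y : G} (hy : 0 ≤ y) (hxu : x ≤ u) : x ≤ oplus u x y :=
  le_inf (le_add_of_nonneg_right hy) hxu

private lemma SP.le_oplus_right {x y : G} (hy : 0 ≤ y) (hxu : x ≤ u) : x ≤ oplus u y x :=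
  le_inf (le_add_of_nonneg_left hy) hxu

private lemma SP.nOplus_nonneg (hu : 0 ≤ u) {y : G} (hy : 0 ≤ y) :
    ∀ n, 0 ≤ nOplus u n y
  | 0 => le_rfl
  | n + 1 => SP.oplus_nonneg hu (SP.nOplus_nonneg hu hy n) hy

private lemma SP.nOplus_mono {y z : G} (h : y ≤ z) : ∀ n, nOplus u n y ≤ nOplus u n z
  | 0 => le_rfl
  | n + 1 => SP.oplus_mono (SP.nOplus_mono h n) h

private lemma SP.disj_nOplus (hu : 0 ≤ u) {a y : G} (ha : 0 ≤ a) (hy : 0 ≤ y)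
    (h : a ⊓ y = 0) : ∀ n, a ⊓ nOplus u n y = 0
  | 0 => inf_eq_right.mpr ha
  | n + 1 => by
      have h1 : a ⊓ (nOplus u n y + y) = 0 :=
        SP.disj_add ha (SP.nOplus_nonneg hu hy n) hy (SP.disj_nOplus hu ha hy h n) h
      refine le_antisymm ?_
        (le_inf ha (SP.oplus_nonneg hu (SP.nOplus_nonneg hu hy n) hy))
      calc a ⊓ nOplus u (n + 1) y ≤ a ⊓ (nOplus u n y + y) :=
            inf_le_inf_left a inf_le_left
        _ = 0 := h1

private lemma SP.subalg_odot {N : Set G} (hN : IsSubalg u N) {x y : G}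
    (hx : x ∈ N) (hy : y ∈ N) : odot u x y ∈ N := by
  have key : odot u x y = -(oplus u (u - y) (u - x)) + u := by
    unfold odot oplus
    rw [neg_inf, sup_add]
    congr 1
    · simp [sub_eq_add_neg, neg_add_rev, add_assoc]
    · exact (neg_add_cancel u).symm
  rw [key]
  exact hN.2.2.2.2.2 _ (hN.2.2.2.1 _ (hN.2.2.2.2.1 y hy) _ (hN.2.2.2.2.1 x hx))

private lemma SP.subalg_sup {N : Set G} (hN : IsSubalg u N) {x y : G}
    (hx : x ∈ N) (hy : y ∈ N) : x ⊔ y ∈ N := by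
  have hxu : x ≤ u := (hN.1 hx).2
  have hyu : y ≤ u := (hN.1 hy).2
  have key : x ⊔ y = oplus u x (odot u (-x + u) y) := by
    unfold oplus odot
    have h1 : -x + u - u + y = -x + y := by simp [sub_eq_add_neg, add_assoc]
    rw [h1, add_sup (-x + y) 0 x, add_neg_cancel_left, add_zero, sup_comm y x]
    exact (inf_eq_left.mpr (sup_le hxu hyu)).symm
  rw [key]
  exact hN.2.2.2.1 x hx _ (SP.subalg_odot hN (hN.2.2.2.2.2 x hx) hy)

private lemma SP.subalg_inf {N : Set G} (hN : IsSubalg u N) {x y : G}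
    (hx : x ∈ N) (hy : y ∈ N) : x ⊓ y ∈ N := by
  have key : x ⊓ y = -((u - x) ⊔ (u - y)) + u := by
    have h1 : (u - x) ⊔ (u - y) = u + -(x ⊓ y) := by
      rw [neg_inf, sub_eq_add_neg, sub_eq_add_neg, add_sup (-x) (-y) u]
    rw [h1, neg_add_rev, neg_neg, add_assoc, neg_add_cancel, add_zero]
  rw [key]
  exact hN.2.2.2.2.2 _ (SP.subalg_sup hN (hN.2.2.2.2.1 x hx) (hN.2.2.2.2.1 y hy))

private lemma SP.resid_right {x z : G} (hxz : x ≤ z) (hzu : z ≤ u) :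
    oplus u ((z - x) ⊔ 0) x = z := by
  unfold oplus
  rw [sup_add (z - x) 0 x, sub_add_cancel, zero_add, sup_eq_left.mpr hxz,
    inf_eq_left.mpr hzu]

private lemma SP.resid_left {x z : G} (hxz : x ≤ z) (hzu : z ≤ u) :
    oplus u x ((-x + z) ⊔ 0) = z := by
  unfold oplus
  rw [add_sup (-x + z) 0 x, add_neg_cancel_left, add_zero, sup_eq_left.mpr hxz,
    inf_eq_left.mpr hzu]

private lemma SP.resid_right_le {p x : G} (hp : 0 ≤ p) : (oplus u p x - x) ⊔ 0 ≤ p := by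
  unfold oplus
  rw [sub_eq_add_neg, inf_add (p + x) u (-x), add_neg_cancel_right]
  exact sup_le inf_le_left hp

private lemma SP.resid_left_le {q x : G} (hq : 0 ≤ q) : (-x + oplus u x q) ⊔ 0 ≤ q := by
  unfold oplus
  rw [add_inf (x + q) u (-x), neg_add_cancel_left]
  exact sup_le inf_le_left hq

private lemma SP.mem_sub_sup {N : Set G} (hN : IsSubalg u N) {z x : G}
    (hz : z ∈ N) (hx : x ∈ N) : (z - x) ⊔ 0 ∈ N := by
  have key : (z - x) ⊔ 0 = odot u z (u - x) := by
    unfold odot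
    congr 1
    simp [sub_eq_add_neg, add_assoc]
  rw [key]
  exact SP.subalg_odot hN hz (hN.2.2.2.2.1 x hx)

private lemma SP.mem_neg_add_sup {N : Set G} (hN : IsSubalg u N) {z x : G}
    (hz : z ∈ N) (hx : x ∈ N) : (-x + z) ⊔ 0 ∈ N := by
  have key : (-x + z) ⊔ 0 = odot u (-x + u) z := by
    unfold odot
    congr 1
    simp [sub_eq_add_neg, add_assoc]
  rw [key]
  exact SP.subalg_odot hN (hN.2.2.2.2.2 x hx) hz

private lemma SP.oplus_oplus_left {x y z : G} (hz : 0 ≤ z) :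
    oplus u (oplus u x y) z = (x + y + z) ⊓ u := by
  unfold oplus
  rw [inf_add (x + y) u z, inf_assoc, inf_eq_right.mpr (le_add_of_nonneg_right hz)]

private lemma SP.oplus_oplus_right {x y z : G} (hx : 0 ≤ x) :
    oplus u x (oplus u y z) = (x + (y + z)) ⊓ u := by
  unfold oplus
  rw [add_inf (y + z) u x, inf_assoc, inf_eq_right.mpr (le_add_of_nonneg_left hx)]

private lemma SP.oplus_assoc {x y z : G} (hx : 0 ≤ x) (hz : 0 ≤ z) :
    oplus u (oplus u x y) z = oplus u x (oplus u y z) := by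
  rw [SP.oplus_oplus_left hz, SP.oplus_oplus_right hx, add_assoc]

private lemma SP.add_inf_u_le (hu : 0 ≤ u) {a b : G} (ha : 0 ≤ a) (hb : 0 ≤ b) :
    (a + b) ⊓ u ≤ ((a ⊓ u) + (b ⊓ u)) ⊓ u := by
  refine le_inf ?_ inf_le_right
  rw [inf_add a u (b ⊓ u), add_inf b u a, add_inf b u u]
  refine le_inf (le_inf inf_le_left ?_) (le_inf ?_ ?_)
  · exact inf_le_right.trans (le_add_of_nonneg_left ha)
  · exact inf_le_right.trans (le_add_of_nonneg_right hb)
  · exact inf_le_right.trans (le_add_of_nonneg_right hu)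

private lemma SP.oplus_oplus_le (hu : 0 ≤ u) {e1 f1 e2 f2 : G}
    (he1 : 0 ≤ e1) (hf1 : 0 ≤ f1) (he2 : 0 ≤ e2) (hf2 : 0 ≤ f2) (hd : f1 ⊓ e2 = 0) :
    oplus u (oplus u e1 f1) (oplus u e2 f2) ≤ oplus u (oplus u e1 e2) (oplus u f1 f2) := by
  have hc : f1 + e2 = e2 + f1 := SP.inf_zero_add_comm hd
  have hre : e1 + f1 + (e2 + f2) = e1 + e2 + (f1 + f2) := by
    rw [← add_assoc, ← add_assoc, add_assoc e1 f1 e2, hc, ← add_assoc]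
  calc oplus u (oplus u e1 f1) (oplus u e2 f2)
      ≤ ((e1 + f1) + (e2 + f2)) ⊓ u := by
        unfold oplus
        exact inf_le_inf (add_le_add inf_le_left inf_le_left) le_rfl
    _ = (e1 + e2 + (f1 + f2)) ⊓ u := by rw [hre]
    _ ≤ (((e1 + e2) ⊓ u) + ((f1 + f2) ⊓ u)) ⊓ u :=
        SP.add_inf_u_le hu (add_nonneg he1 he2) (add_nonneg hf1 hf2)
    _ = oplus u (oplus u e1 e2) (oplus u f1 f2) := rfl

private lemma SP.polar_subset {C X : Set G} : polarIn C X ⊆ C := fun _ h => h.1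

private lemma SP.polar_antitone {C X Y : Set G} (h : X ⊆ Y) :
    polarIn C Y ⊆ polarIn C X := fun y hy => ⟨hy.1, fun x hx => hy.2 x (h hx)⟩

private lemma SP.subset_polar_polar {C X : Set G} (hX : X ⊆ C) :
    X ⊆ polarIn C (polarIn C X) :=
  fun x hx => ⟨hX hx, fun y hy => by rw [inf_comm]; exact hy.2 x hx⟩

private lemma SP.polar3 {C X : Set G} (hX : X ⊆ C) :
    polarIn C (polarIn C (polarIn C X)) = polarIn C X :=
  subset_antisymm (SP.polar_antitone (SP.subset_polar_polar hX))
    (SP.subset_polar_polar SP.polar_subset)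

private lemma SP.polarIn_eq_inter {C N : Set G} (hN : N ⊆ C) (X : Set G) :
    polarIn N X = polarIn C X ∩ N := by
  ext y
  constructor
  · rintro ⟨h1, h2⟩
    exact ⟨⟨hN h1, h2⟩, h1⟩
  · rintro ⟨⟨_, h2⟩, h1⟩
    exact ⟨h1, h2⟩

private lemma SP.zero_mem_polar {C X : Set G} (h0 : 0 ∈ C)
    (hX : X ⊆ Set.Icc (0 : G) u) : (0 : G) ∈ polarIn C X :=
  ⟨h0, fun x hx => inf_eq_left.mpr (hX hx).1⟩

private lemma SP.polar_large (hu : 0 ≤ u) {A N : Set G} (hA : IsLargeSubalg u A)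
    (hAN : A ⊆ N) (X : Set G) (hX : X ⊆ Set.Icc (0 : G) u) :
    polarIn (Set.Icc (0 : G) u) (polarIn (Set.Icc (0 : G) u) X ∩ N)
      = polarIn (Set.Icc (0 : G) u) (polarIn (Set.Icc (0 : G) u) X) := by
  refine subset_antisymm ?_ (SP.polar_antitone Set.inter_subset_left)
  rintro y ⟨hyB, hy⟩
  refine ⟨hyB, fun z hz => ?_⟩
  by_contra hne
  have hyz : y ⊓ z ∈ Set.Icc (0 : G) u :=
    ⟨le_inf hyB.1 hz.1.1, inf_le_left.trans hyB.2⟩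
  obtain ⟨n, a, haA, ha0, hale⟩ := hA.2 (y ⊓ z) hyz hne
  have haB : a ∈ Set.Icc (0 : G) u := hA.1.1 haA
  have haX : a ∈ polarIn (Set.Icc (0 : G) u) X := by
    refine ⟨haB, fun x hx => ?_⟩
    have hxz : x ⊓ z = 0 := by rw [inf_comm]; exact hz.2 x hx
    have h1 : x ⊓ nOplus u n z = 0 := SP.disj_nOplus hu (hX hx).1 hz.1.1 hxz n
    refine le_antisymm ?_ (le_inf haB.1 (hX hx).1)
    calc a ⊓ x ≤ nOplus u n z ⊓ x :=
          inf_le_inf_right x (hale.trans (SP.nOplus_mono inf_le_right n))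
      _ = x ⊓ nOplus u n z := inf_comm _ _
      _ = 0 := h1
  have hya : y ⊓ a = 0 := hy a ⟨haX, hAN haA⟩
  have hay : a ⊓ nOplus u n y = 0 :=
    SP.disj_nOplus hu haB.1 hyB.1 (by rw [inf_comm]; exact hya) n
  have hle : a ≤ nOplus u n y := hale.trans (SP.nOplus_mono inf_le_left n)
  exact ha0 ((inf_eq_left.mpr hle).symm.trans hay)

private lemma SP.normal_restrict {N P : Set G} (hN : IsSubalg u N)
    (hP : IsNormalIdealIn u (Set.Icc (0 : G) u) P) :
    IsNormalIdealIn u N (P ∩ N) := by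
  have h0P : (0 : G) ∈ P := by
    obtain ⟨p, hp⟩ := hP.1.2.1
    exact hP.1.2.2.1 p hp 0 ⟨le_rfl, (hP.1.1 hp).1.trans (hP.1.1 hp).2⟩ (hP.1.1 hp).1
  constructor
  · refine ⟨Set.inter_subset_right, ⟨0, h0P, hN.2.1⟩, ?_, ?_⟩
    · rintro x ⟨hxP, _⟩ y hyN hyx
      exact ⟨hP.1.2.2.1 x hxP y (hN.1 hyN) hyx, hyN⟩
    · rintro x ⟨hxP, hxN⟩ y ⟨hyP, hyN⟩
      exact ⟨hP.1.2.2.2 x hxP y hyP, hN.2.2.2.1 x hxN y hyN⟩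
  · intro x hxN
    have hxB := hN.1 hxN
    ext w
    simp only [Set.mem_image]
    constructor
    · rintro ⟨i, ⟨hiP, hiN⟩, rfl⟩
      have hmem : oplus u x i ∈ (fun i => oplus u i x) '' P := by
        rw [← hP.2 x hxB]
        exact ⟨i, hiP, rfl⟩
      obtain ⟨p, hpP, hpx⟩ := hmem
      change oplus u p x = oplus u x i at hpx
      have hxle : x ≤ oplus u x i := SP.le_oplus_left (hN.1 hiN).1 hxB.2
      have hjN : (oplus u x i - x) ⊔ 0 ∈ N :=
        SP.mem_sub_sup hN (hN.2.2.2.1 x hxN i hiN) hxN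
      have hjle : (oplus u x i - x) ⊔ 0 ≤ p := by
        rw [← hpx]
        exact SP.resid_right_le (hP.1.1 hpP).1
      exact ⟨(oplus u x i - x) ⊔ 0,
        ⟨hP.1.2.2.1 p hpP _ (hN.1 hjN) hjle, hjN⟩,
        SP.resid_right hxle SP.oplus_le_u⟩
    · rintro ⟨i, ⟨hiP, hiN⟩, rfl⟩
      have hmem : oplus u i x ∈ (fun i => oplus u x i) '' P := by
        rw [hP.2 x hxB]
        exact ⟨i, hiP, rfl⟩
      obtain ⟨q, hqP, hqx⟩ := hmem
      change oplus u x q = oplus u i x at hqx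
      have hxle : x ≤ oplus u i x := SP.le_oplus_right (hN.1 hiN).1 hxB.2
      have hjN : (-x + oplus u i x) ⊔ 0 ∈ N :=
        SP.mem_neg_add_sup hN (hN.2.2.2.1 i hiN x hxN) hxN
      have hjle : (-x + oplus u i x) ⊔ 0 ≤ q := by
        rw [← hqx]
        exact SP.resid_left_le (hP.1.1 hqP).1
      exact ⟨(-x + oplus u i x) ⊔ 0,
        ⟨hP.1.2.2.1 q hqP _ (hN.1 hjN) hjle, hjN⟩,
        SP.resid_left hxle SP.oplus_le_u⟩

private lemma SP.self_normal {N : Set G} (hN : IsSubalg u N) : IsNormalIdealIn u N N := by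
  refine ⟨⟨subset_rfl, ⟨0, hN.2.1⟩, fun _ _ y hy _ => hy,
    fun x hx y hy => hN.2.2.2.1 x hx y hy⟩, ?_⟩
  intro x hxN
  have hxB := hN.1 hxN
  ext w
  simp only [Set.mem_image]
  constructor
  · rintro ⟨i, hiN, rfl⟩
    exact ⟨(oplus u x i - x) ⊔ 0, SP.mem_sub_sup hN (hN.2.2.2.1 x hxN i hiN) hxN,
      SP.resid_right (SP.le_oplus_left (hN.1 hiN).1 hxB.2) SP.oplus_le_u⟩
  · rintro ⟨i, hiN, rfl⟩
    exact ⟨(-x + oplus u i x) ⊔ 0, SP.mem_neg_add_sup hN (hN.2.2.2.1 i hiN x hxN) hxN,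
      SP.resid_left (SP.le_oplus_right (hN.1 hiN).1 hxB.2) SP.oplus_le_u⟩

private lemma SP.extract (hu : 0 ≤ u) {N I J : Set G} (hN : IsSubalg u N)
    (hI : IsNormalIdealIn u N I) (hJ : IsNormalIdealIn u N J)
    (hIJ : I ∩ J = {0}) (hgen : normalGenIn u N (I ∪ J) = N) :
    ∃ e ∈ I, ∃ f ∈ J, u ≤ e + f := by
  have hIN := hI.1.1
  have hJN := hJ.1.1
  have hnn : ∀ x ∈ N, 0 ≤ x := fun x hx => (hN.1 hx).1
  have hlu : ∀ x ∈ N, x ≤ u := fun x hx => (hN.1 hx).2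
  have h0I : 0 ∈ I := by
    obtain ⟨p, hp⟩ := hI.1.2.1
    exact hI.1.2.2.1 p hp 0 hN.2.1 (hnn p (hIN hp))
  have h0J : 0 ∈ J := by
    obtain ⟨p, hp⟩ := hJ.1.2.1
    exact hJ.1.2.2.1 p hp 0 hN.2.1 (hnn p (hJN hp))
  have hdisj : ∀ p ∈ I, ∀ q ∈ J, p ⊓ q = 0 := by
    intro p hp q hq
    have hm : p ⊓ q ∈ N := SP.subalg_inf hN (hIN hp) (hJN hq)
    have h1 : p ⊓ q ∈ I := hI.1.2.2.1 p hp _ hm inf_le_left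
    have h2 : p ⊓ q ∈ J := hJ.1.2.2.1 q hq _ hm inf_le_right
    have h3 : p ⊓ q ∈ ({0} : Set G) := hIJ ▸ Set.mem_inter h1 h2
    exact h3
  have hND : normalGenIn u N (I ∪ J) ⊆ {z ∈ N | ∃ e ∈ I, ∃ f ∈ J, z ≤ oplus u e f} := by
    apply Set.sInter_subset_of_mem
    refine ⟨⟨⟨fun z hz => hz.1,
      ⟨0, hN.2.1, 0, h0I, 0, h0J, SP.oplus_nonneg hu le_rfl le_rfl⟩, ?_, ?_⟩, ?_⟩, ?_⟩
    · rintro x ⟨hxN, e, he, f, hf, hle⟩ y hyN hyx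
      exact ⟨hyN, e, he, f, hf, hyx.trans hle⟩
    · rintro x ⟨hxN, e1, he1, f1, hf1, h1⟩ y ⟨hyN, e2, he2, f2, hf2, h2⟩
      refine ⟨hN.2.2.2.1 x hxN y hyN, oplus u e1 e2, hI.1.2.2.2 e1 he1 e2 he2,
        oplus u f1 f2, hJ.1.2.2.2 f1 hf1 f2 hf2, ?_⟩
      calc oplus u x y ≤ oplus u (oplus u e1 f1) (oplus u e2 f2) := SP.oplus_mono h1 h2
        _ ≤ oplus u (oplus u e1 e2) (oplus u f1 f2) :=
            SP.oplus_oplus_le hu (hnn _ (hIN he1)) (hnn _ (hJN hf1)) (hnn _ (hIN he2))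
              (hnn _ (hJN hf2)) (by rw [inf_comm]; exact hdisj e2 he2 f1 hf1)
    · -- normality of D
      intro x hxN
      have hxB := hN.1 hxN
      ext w
      simp only [Set.mem_image]
      constructor
      · rintro ⟨z, ⟨hzN, e, he, f, hf, hzle⟩, rfl⟩
        have hmem1 : oplus u x e ∈ (fun i => oplus u i x) '' I := by
          rw [← hI.2 x hxN]
          exact ⟨e, he, rfl⟩
        obtain ⟨e1, he1, hee⟩ := hmem1
        change oplus u e1 x = oplus u x e at hee
        have hmem2 : oplus u x f ∈ (fun i => oplus u i x) '' J := by
          rw [← hJ.2 x hxN]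
          exact ⟨f, hf, rfl⟩
        obtain ⟨f1, hf1, hff⟩ := hmem2
        change oplus u f1 x = oplus u x f at hff
        have hch : oplus u x (oplus u e f) = oplus u (oplus u e1 f1) x := by
          rw [← SP.oplus_assoc hxB.1 (hnn f (hJN hf)), ← hee,
            SP.oplus_assoc (hnn e1 (hIN he1)) (hnn f (hJN hf)), ← hff,
            ← SP.oplus_assoc (hnn e1 (hIN he1)) hxB.1]
        have hxlez : x ≤ oplus u x z := SP.le_oplus_left (hnn z hzN) hxB.2
        have hjN : (oplus u x z - x) ⊔ 0 ∈ N :=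
          SP.mem_sub_sup hN (hN.2.2.2.1 x hxN z hzN) hxN
        have hjle : (oplus u x z - x) ⊔ 0 ≤ oplus u e1 f1 := by
          have h1 : oplus u x z ≤ oplus u (oplus u e1 f1) x := by
            rw [← hch]
            exact SP.oplus_mono le_rfl hzle
          have hmono : oplus u x z - x ≤ oplus u (oplus u e1 f1) x - x := by
            rw [sub_eq_add_neg, sub_eq_add_neg]
            exact add_le_add_left h1 (-x)
          calc (oplus u x z - x) ⊔ 0 ≤ (oplus u (oplus u e1 f1) x - x) ⊔ 0 :=
              sup_le_sup_right hmono 0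
            _ ≤ oplus u e1 f1 :=
              SP.resid_right_le (SP.oplus_nonneg hu (hnn _ (hIN he1)) (hnn _ (hJN hf1)))
        exact ⟨(oplus u x z - x) ⊔ 0, ⟨hjN, e1, he1, f1, hf1, hjle⟩,
          SP.resid_right hxlez SP.oplus_le_u⟩
      · rintro ⟨z, ⟨hzN, e, he, f, hf, hzle⟩, rfl⟩
        have hmem1 : oplus u f x ∈ (fun i => oplus u x i) '' J := by
          rw [hJ.2 x hxN]
          exact ⟨f, hf, rfl⟩
        obtain ⟨f2, hf2, hff⟩ := hmem1
        change oplus u x f2 = oplus u f x at hff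
        have hmem2 : oplus u e x ∈ (fun i => oplus u x i) '' I := by
          rw [hI.2 x hxN]
          exact ⟨e, he, rfl⟩
        obtain ⟨e2, he2, hee⟩ := hmem2
        change oplus u x e2 = oplus u e x at hee
        have hch : oplus u (oplus u e f) x = oplus u x (oplus u e2 f2) := by
          rw [SP.oplus_assoc (hnn e (hIN he)) hxB.1, ← hff,
            ← SP.oplus_assoc (hnn e (hIN he)) (hnn f2 (hJN hf2)), ← hee,
            SP.oplus_assoc hxB.1 (hnn f2 (hJN hf2))]
        have hxlez : x ≤ oplus u z x := SP.le_oplus_right (hnn z hzN) hxB.2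
        have hjN : (-x + oplus u z x) ⊔ 0 ∈ N :=
          SP.mem_neg_add_sup hN (hN.2.2.2.1 z hzN x hxN) hxN
        have hjle : (-x + oplus u z x) ⊔ 0 ≤ oplus u e2 f2 := by
          have h1 : oplus u z x ≤ oplus u x (oplus u e2 f2) := by
            rw [← hch]
            exact SP.oplus_mono hzle le_rfl
          calc (-x + oplus u z x) ⊔ 0 ≤ (-x + oplus u x (oplus u e2 f2)) ⊔ 0 :=
              sup_le_sup_right (add_le_add_right h1 (-x)) 0
            _ ≤ oplus u e2 f2 :=
              SP.resid_left_le (SP.oplus_nonneg hu (hnn _ (hIN he2)) (hnn _ (hJN hf2)))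
        exact ⟨(-x + oplus u z x) ⊔ 0, ⟨hjN, e2, he2, f2, hf2, hjle⟩,
          SP.resid_left hxlez SP.oplus_le_u⟩
    · rintro z (hz | hz)
      · exact ⟨hIN hz, z, hz, 0, h0J, le_inf (by simp) (hlu z (hIN hz))⟩
      · exact ⟨hJN hz, 0, h0I, z, hz, le_inf (by simp) (hlu z (hJN hz))⟩
  obtain ⟨-, e, he, f, hf, hle⟩ := hND (by rw [hgen]; exact hN.2.2.1)
  exact ⟨e, he, f, hf, hle.trans inf_le_left⟩

private lemma SP.unique_split {P : Set G} (hP : P ⊆ Set.Icc (0 : G) u)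
    {e f e' f' : G} (he : e ∈ P) (he' : e' ∈ P) (hf0 : 0 ≤ f) (hf'0 : 0 ≤ f')
    (hf : ∀ p ∈ P, f ⊓ p = 0) (hf' : ∀ p ∈ P, f' ⊓ p = 0)
    (h1 : e + f = u) (h2 : e' + f' = u) : e = e' := by
  have step : ∀ a b d : G, a ∈ P → b ∈ P → 0 ≤ d → (∀ p ∈ P, d ⊓ p = 0) →
      b + d = u → a ≤ b := by
    intro a b d ha hb hd hdP hbd
    have h3 : a = a ⊓ (b + d) := by
      rw [hbd]
      exact (inf_eq_left.mpr (hP ha).2).symm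
    have h4 : a ⊓ d = 0 := by rw [inf_comm]; exact hdP a ha
    calc a = a ⊓ (b + d) := h3
      _ ≤ a ⊓ b + a ⊓ d := SP.meet_add_le (hP ha).1 (hP hb).1 hd
      _ = a ⊓ b := by rw [h4, add_zero]
      _ ≤ b := inf_le_right
  exact le_antisymm (step e e' f' he he' hf'0 hf' h2) (step e' e f he' he hf0 hf h1)

end SPHelpers

theorem stmt18 (u : G) (hu : IsStrongUnit u) (A : Set G)
    (hA : IsLargeSubalg u A)
    (hB : IsStronglyProjectableIn u (Set.Icc (0 : G) u)) :
    IsSubalg u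
        (⋂₀ {N : Set G | IsSubalg u N ∧ IsStronglyProjectableIn u N ∧ A ⊆ N}) ∧
      IsStronglyProjectableIn u
        (⋂₀ {N : Set G | IsSubalg u N ∧ IsStronglyProjectableIn u N ∧ A ⊆ N}) ∧
      A ⊆ ⋂₀ {N : Set G | IsSubalg u N ∧ IsStronglyProjectableIn u N ∧ A ⊆ N} := by
  have hu0 : 0 ≤ u := hu.1
  have hBsubalg : IsSubalg u (Set.Icc (0 : G) u) := by
    refine ⟨subset_rfl, ⟨le_rfl, hu0⟩, ⟨hu0, le_rfl⟩, ?_, ?_, ?_⟩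
    · intro x hx y hy
      exact ⟨le_inf (add_nonneg hx.1 hy.1) hu0, inf_le_right⟩
    · intro x hx
      constructor
      · rw [sub_nonneg]; exact hx.2
      · calc u - x = u + -x := sub_eq_add_neg u x
          _ ≤ u + 0 := add_le_add_right (neg_nonpos.mpr hx.1) u
          _ = u := add_zero u
    · intro x hx
      constructor
      · have h := add_le_add_right hx.2 (-x)
        rwa [neg_add_cancel] at h
      · calc -x + u ≤ 0 + u := add_le_add_left (neg_nonpos.mpr hx.1) u
          _ = u := zero_add u
  set S := {N : Set G | IsSubalg u N ∧ IsStronglyProjectableIn u N ∧ A ⊆ N} with hS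
  have hBS : Set.Icc (0 : G) u ∈ S := ⟨hBsubalg, hB, hA.1.1⟩
  have hMB : ⋂₀ S ⊆ Set.Icc (0 : G) u := Set.sInter_subset_of_mem hBS
  have hAM : A ⊆ ⋂₀ S := fun a ha => Set.mem_sInter.mpr fun N hN => hN.2.2 ha
  have hMsub : IsSubalg u (⋂₀ S) := by
    refine ⟨hMB, ?_, ?_, ?_, ?_, ?_⟩
    · exact Set.mem_sInter.mpr fun N hN => hN.1.2.1
    · exact Set.mem_sInter.mpr fun N hN => hN.1.2.2.1
    · intro x hx y hy
      exact Set.mem_sInter.mpr fun N hN =>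
        hN.1.2.2.2.1 x (Set.mem_sInter.mp hx N hN) y (Set.mem_sInter.mp hy N hN)
    · intro x hx
      exact Set.mem_sInter.mpr fun N hN => hN.1.2.2.2.2.1 x (Set.mem_sInter.mp hx N hN)
    · intro x hx
      exact Set.mem_sInter.mpr fun N hN => hN.1.2.2.2.2.2 x (Set.mem_sInter.mp hx N hN)
  refine ⟨hMsub, ?_, hAM⟩
  intro I hIpol
  have hIpol' : polarIn (⋂₀ S) (polarIn (⋂₀ S) I) = I := hIpol
  have hIM : I ⊆ ⋂₀ S := by rw [← hIpol']; exact SP.polar_subset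
  have hIB : I ⊆ Set.Icc (0 : G) u := hIM.trans hMB
  -- P := polar_B (polar_B I)
  have hIeq : I = polarIn (Set.Icc (0 : G) u) (polarIn (Set.Icc (0 : G) u) I) ∩ ⋂₀ S := by
    conv_lhs => rw [← hIpol']
    rw [SP.polarIn_eq_inter hMB, SP.polarIn_eq_inter hMB,
      SP.polar_large hu0 hA hAM I hIB]
  have hPB : polarIn (Set.Icc (0 : G) u) (polarIn (Set.Icc (0 : G) u) I)
      ⊆ Set.Icc (0 : G) u := SP.polar_subset
  have hIP : I ⊆ polarIn (Set.Icc (0 : G) u) (polarIn (Set.Icc (0 : G) u) I) :=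
    SP.subset_polar_polar hIB
  have hPpol : IsPolarIdealIn (Set.Icc (0 : G) u)
      (polarIn (Set.Icc (0 : G) u) (polarIn (Set.Icc (0 : G) u) I)) := by
    show polarIn _ (polarIn _ _) = _
    rw [SP.polar3 hIB]
  obtain ⟨hPnormal, Q, hQnormal, hPQ, hgenB⟩ := hB _ hPpol
  have hpIpol : IsPolarIdealIn (Set.Icc (0 : G) u) (polarIn (Set.Icc (0 : G) u) I) :=
    SP.polar3 hIB
  have hpInormal := (hB _ hpIpol).1
  -- existence of a splitting element in each member of S
  have key : ∀ N ∈ S, ∃ e ∈ N,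
      e ∈ polarIn (Set.Icc (0 : G) u) (polarIn (Set.Icc (0 : G) u) I) ∧
      ∀ p ∈ polarIn (Set.Icc (0 : G) u) (polarIn (Set.Icc (0 : G) u) I),
        (-e + u) ⊓ p = 0 := by
    intro N hN
    obtain ⟨hNsub, hNsp, hAN⟩ := hN
    have hNB : N ⊆ Set.Icc (0 : G) u := hNsub.1
    have e1 : polarIn N (polarIn (Set.Icc (0 : G) u) (polarIn (Set.Icc (0 : G) u) I) ∩ N)
        = polarIn (Set.Icc (0 : G) u) I ∩ N := by
      rw [SP.polarIn_eq_inter hNB,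
        SP.polar_large hu0 hA hAN (polarIn (Set.Icc (0 : G) u) I) SP.polar_subset,
        SP.polar3 hIB]
    have e2 : IsPolarIdealIn N
        (polarIn (Set.Icc (0 : G) u) (polarIn (Set.Icc (0 : G) u) I) ∩ N) := by
      show polarIn N (polarIn N _) = _
      rw [e1, SP.polarIn_eq_inter hNB, SP.polar_large hu0 hA hAN I hIB]
    obtain ⟨hInormalN, J, hJnormalN, hIJN, hgenN⟩ := hNsp _ e2
    obtain ⟨e, heI, f, hfJ, hef⟩ := SP.extract hu0 hNsub hInormalN hJnormalN hIJN hgenN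
    refine ⟨e, heI.2, heI.1, ?_⟩
    have hgN : -e + u ∈ N := hNsub.2.2.2.2.2 e heI.2
    have hgf : -e + u ≤ f := by
      have h := add_le_add_right hef (-e)
      rwa [neg_add_cancel_left] at h
    have hgJ : -e + u ∈ J := hJnormalN.1.2.2.1 f hfJ _ hgN hgf
    have hgdis : ∀ i ∈ polarIn (Set.Icc (0 : G) u) (polarIn (Set.Icc (0 : G) u) I) ∩ N,
        (-e + u) ⊓ i = 0 := by
      intro i hi
      have hm : (-e + u) ⊓ i ∈ N := SP.subalg_inf hNsub hgN hi.2
      have h1 : (-e + u) ⊓ i ∈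
          polarIn (Set.Icc (0 : G) u) (polarIn (Set.Icc (0 : G) u) I) ∩ N :=
        ⟨hPnormal.1.2.2.1 i hi.1 _ (hNB hm) inf_le_right, hm⟩
      have h2 : (-e + u) ⊓ i ∈ J := hJnormalN.1.2.2.1 _ hgJ _ hm inf_le_left
      have h3 : (-e + u) ⊓ i ∈ ({0} : Set G) := hIJN ▸ Set.mem_inter h1 h2
      exact h3
    have hgpBI : -e + u ∈ polarIn (Set.Icc (0 : G) u) (polarIn (Set.Icc (0 : G) u) I) →
        True := fun _ => trivial
    have hgmem : -e + u ∈ polarIn (Set.Icc (0 : G) u) I := by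
      have hmem : -e + u ∈ polarIn N
          (polarIn (Set.Icc (0 : G) u) (polarIn (Set.Icc (0 : G) u) I) ∩ N) :=
        ⟨hgN, hgdis⟩
      rw [e1] at hmem
      exact hmem.1
    intro p hp
    rw [inf_comm]
    exact hp.2 _ hgmem
  obtain ⟨e0, he0B, he0P, he0dis⟩ := key _ hBS
  have hsplit0 : ∀ (e : G), e ∈ polarIn (Set.Icc (0 : G) u) (polarIn (Set.Icc (0 : G) u) I) →
      0 ≤ -e + u := by
    intro e he
    have h := add_le_add_right (hPB he).2 (-e)
    rwa [neg_add_cancel] at h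
  have huniq : ∀ N ∈ S, ∀ e ∈ N,
      e ∈ polarIn (Set.Icc (0 : G) u) (polarIn (Set.Icc (0 : G) u) I) →
      (∀ p ∈ polarIn (Set.Icc (0 : G) u) (polarIn (Set.Icc (0 : G) u) I),
        (-e + u) ⊓ p = 0) → e = e0 := by
    intro N hN e heN heP hedis
    exact SP.unique_split hPB heP he0P (hsplit0 e heP) (hsplit0 e0 he0P) hedis he0dis
      (add_neg_cancel_left e u) (add_neg_cancel_left e0 u)
  have he0M : e0 ∈ ⋂₀ S := Set.mem_sInter.mpr fun N hN => by
    obtain ⟨e, heN, heP, hedis⟩ := key N hN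
    exact huniq N hN e heN heP hedis ▸ heN
  have hf0M : -e0 + u ∈ ⋂₀ S := hMsub.2.2.2.2.2 e0 he0M
  have he0I : e0 ∈ I := by rw [hIeq]; exact ⟨he0P, he0M⟩
  have h0P : (0 : G) ∈ polarIn (Set.Icc (0 : G) u) (polarIn (Set.Icc (0 : G) u) I) :=
    SP.zero_mem_polar ⟨le_rfl, hu0⟩ SP.polar_subset
  have hf0pBI : -e0 + u ∈ polarIn (Set.Icc (0 : G) u) I :=
    ⟨hMB hf0M, fun i hi => he0dis i (hIP hi)⟩
  -- assemble the summand structure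
  refine ⟨?_, polarIn (Set.Icc (0 : G) u) I ∩ ⋂₀ S, ?_, ?_, ?_⟩
  · have h := SP.normal_restrict hMsub hPnormal
    rwa [← hIeq] at h
  · exact SP.normal_restrict hMsub hpInormal
  · ext x
    constructor
    · rintro ⟨hxI, hxpBI, _⟩
      have h : x ⊓ x = 0 := hxpBI.2 x hxI
      rw [inf_idem] at h
      simp [h]
    · intro hx
      rw [Set.mem_singleton_iff] at hx
      subst hx
      exact ⟨by rw [hIeq]; exact ⟨h0P, hMsub.2.1⟩,
        SP.zero_mem_polar ⟨le_rfl, hu0⟩ hIB, hMsub.2.1⟩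
  · apply subset_antisymm
    · apply Set.sInter_subset_of_mem
      exact ⟨SP.self_normal hMsub, Set.union_subset hIM Set.inter_subset_right⟩
    · intro z hzM
      apply Set.mem_sInter.mpr
      rintro K ⟨hKnorm, hKsub⟩
      have hzB := hMB hzM
      have hze : z ⊓ e0 ∈ ⋂₀ S := SP.subalg_inf hMsub hzM he0M
      have hzf : z ⊓ (-e0 + u) ∈ ⋂₀ S := SP.subalg_inf hMsub hzM hf0M
      have hzeK : z ⊓ e0 ∈ K :=
        hKnorm.1.2.2.1 e0 (hKsub (Set.mem_union_left _ he0I)) _ hze inf_le_right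
      have hzfK : z ⊓ (-e0 + u) ∈ K :=
        hKnorm.1.2.2.1 _ (hKsub (Set.mem_union_right _ ⟨hf0pBI, hf0M⟩)) _ hzf inf_le_right
      have hw : oplus u (z ⊓ e0) (z ⊓ (-e0 + u)) ∈ K := hKnorm.1.2.2.2 _ hzeK _ hzfK
      have hzle : z ≤ oplus u (z ⊓ e0) (z ⊓ (-e0 + u)) := by
        refine le_inf ?_ hzB.2
        calc z = z ⊓ (e0 + (-e0 + u)) := by
              rw [add_neg_cancel_left]
              exact (inf_eq_left.mpr hzB.2).symm
          _ ≤ z ⊓ e0 + z ⊓ (-e0 + u) :=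
              SP.meet_add_le hzB.1 (hMB he0M).1 (hMB hf0M).1
      have hwM : oplus u (z ⊓ e0) (z ⊓ (-e0 + u)) ∈ ⋂₀ S := hMsub.2.2.2.1 _ hze _ hzf
      exact hKnorm.1.2.2.1 _ hw z hzM hzle
end
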